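/- Every polycyclic group is Hopfian; that is, every surjective group homomorphism from a polycyclic group to itself is injective. -/

import Mathlib

/-- A group is polycyclic if it has a finite subnormal series with cyclic quotients. -/
def IsPolycyclic (G : Type*) [Group G] : Prop :=
  ∃ (n : ℕ) (s : Fin (n + 1) → Subgroup G),
    s 0 = ⊤ ∧ s (Fin.last n) = ⊥ ∧
    ∀ i : Fin n, s i.succ ≤ s i.castSucc ∧
      ((s i.succ).subgroupOf (s i.castSucc)).Normal ∧
      ∃ g ∈ s i.castSucc, s i.castSucc = Subgroup.closure (insert g (s i.succ : Set G))

lemma key_step {G : Type*} [Group G] (K N : Subgroup G) (g : G) (hg : g ∈ K)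
    (hNK : N ≤ K) (hnorm : (N.subgroupOf K).Normal)
    (hK : K = Subgroup.closure (insert g (N : Set G)))
    (H : Subgroup G) (hHK : H ≤ K) (hfg : (H ⊓ N).FG) : H.FG := by
  have conj : ∀ x ∈ K, ∀ n ∈ N, x * n * x⁻¹ ∈ N := by
    intro x hx n hn
    have := hnorm.conj_mem ⟨n, hNK hn⟩ (Subgroup.mem_subgroupOf.mpr hn) ⟨x, hx⟩
    simpa [Subgroup.mem_subgroupOf] using this
  have gz : ∀ m : ℤ, g ^ m ∈ K := fun m => zpow_mem hg m
  have decomp : ∀ x ∈ K, ∃ m : ℤ, ∃ n ∈ N, x = g ^ m * n := by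
    let T : Subgroup G :=
    { carrier := {x | ∃ m : ℤ, ∃ n ∈ N, x = g ^ m * n}
      one_mem' := ⟨0, 1, N.one_mem, by simp⟩
      mul_mem' := by
        rintro x y ⟨a, n1, hn1, rfl⟩ ⟨b, n2, hn2, rfl⟩
        exact ⟨a + b, (g ^ (-b) * n1 * (g ^ (-b))⁻¹) * n2,
          N.mul_mem (conj _ (gz _) _ hn1) hn2, by group⟩
      inv_mem' := by
        rintro x ⟨a, n, hn, rfl⟩
        exact ⟨-a, g ^ a * n⁻¹ * (g ^ a)⁻¹, conj _ (gz _) _ (N.inv_mem hn), by group⟩ }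
    intro x hx
    have hKT : K ≤ T := by
      rw [hK]
      refine (Subgroup.closure_le T).mpr ?_
      rintro y (rfl | hy)
      · exact ⟨1, 1, N.one_mem, by simp⟩
      · exact ⟨0, y, hy, by simp⟩
    exact hKT hx
  let S : AddSubgroup ℤ :=
  { carrier := {m | ∃ x ∈ H, ∃ n ∈ N, x = g ^ m * n}
    zero_mem' := ⟨1, H.one_mem, 1, N.one_mem, by simp⟩
    add_mem' := by
      rintro a b ⟨x, hx, n1, hn1, rfl⟩ ⟨y, hy, n2, hn2, rfl⟩
      exact ⟨_, H.mul_mem hx hy, (g ^ (-b) * n1 * (g ^ (-b))⁻¹) * n2,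
        N.mul_mem (conj _ (gz _) _ hn1) hn2, by group⟩
    neg_mem' := by
      rintro a ⟨x, hx, n, hn, rfl⟩
      exact ⟨_, H.inv_mem hx, g ^ a * n⁻¹ * (g ^ a)⁻¹,
        conj _ (gz _) _ (N.inv_mem hn), by group⟩ }
  obtain ⟨d, hd⟩ := Int.subgroup_cyclic S
  have hdS : d ∈ S := by
    rw [hd]; exact AddSubgroup.mem_closure_singleton.mpr ⟨1, one_smul _ _⟩
  obtain ⟨h0, hh0, n0, hn0, hh0eq⟩ := hdS
  have hpow : ∀ k : ℤ, ∃ nn ∈ N, h0 ^ k = g ^ (d * k) * nn := by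
    intro k
    induction k using Int.induction_on with
    | zero => exact ⟨1, N.one_mem, by simp⟩
    | succ k ih =>
      obtain ⟨nn, hnn, hk⟩ := ih
      refine ⟨(g ^ (-d) * nn * (g ^ (-d))⁻¹) * n0,
        N.mul_mem (conj _ (gz _) _ hnn) hn0, ?_⟩
      rw [zpow_add_one, hk, hh0eq]
      group
    | pred k ih =>
      obtain ⟨nn, hnn, hk⟩ := ih
      refine ⟨g ^ d * (nn * n0⁻¹) * (g ^ d)⁻¹,
        conj _ (gz _) _ (N.mul_mem hnn (N.inv_mem hn0)), ?_⟩
      rw [zpow_sub_one, hk, hh0eq]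
      group
  obtain ⟨S0, hS0, hS0fin⟩ := (Subgroup.fg_iff _).mp hfg
  rw [Subgroup.fg_iff]
  refine ⟨insert h0 S0, ?_, hS0fin.insert h0⟩
  apply le_antisymm
  · refine (Subgroup.closure_le H).mpr ?_
    rintro x (rfl | hx)
    · exact hh0
    · exact (show x ∈ H ⊓ N from hS0 ▸ Subgroup.subset_closure hx).1
  · intro x hx
    obtain ⟨m, n, hn, hxeq⟩ := decomp x (hHK hx)
    have hmS : m ∈ S := ⟨x, hx, n, hn, hxeq⟩
    rw [hd] at hmS
    obtain ⟨k, hk⟩ := AddSubgroup.mem_closure_singleton.mp hmS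
    have hm : m = d * k := by rw [← hk]; simp [smul_eq_mul]; ring
    obtain ⟨nn, hnn, hkpow⟩ := hpow k
    have hy : (h0 ^ k)⁻¹ * x ∈ H ⊓ N := by
      constructor
      · exact H.mul_mem (H.inv_mem (Subgroup.zpow_mem H hh0 k)) hx
      · have heq : (h0 ^ k)⁻¹ * x = nn⁻¹ * n := by
          rw [hkpow, hxeq, hm]; group
        rw [heq]; exact N.mul_mem (N.inv_mem hnn) hn
    have : x = h0 ^ k * ((h0 ^ k)⁻¹ * x) := by group
    rw [this]
    refine Subgroup.mul_mem _ (Subgroup.zpow_mem _ (Subgroup.subset_closure (Set.mem_insert _ _)) k) ?_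
    have : (h0 ^ k)⁻¹ * x ∈ Subgroup.closure S0 := hS0 ▸ hy
    exact Subgroup.closure_mono (Set.subset_insert _ _) this

lemma poly_subgroups_fg {G : Type*} [Group G] (h : IsPolycyclic G) (H : Subgroup G) :
    H.FG := by
  obtain ⟨n, s, h0, hlast, hstep⟩ := h
  suffices key : ∀ i : Fin (n + 1), ∀ H : Subgroup G, H ≤ s i → H.FG by
    exact key 0 H (h0 ▸ le_top)
  intro i
  induction i using Fin.reverseInduction with
  | last =>
    intro H hH
    rw [hlast] at hH
    rw [le_bot_iff.mp hH, Subgroup.fg_iff]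
    exact ⟨∅, by simp, Set.finite_empty⟩
  | cast i ih =>
    intro H hH
    obtain ⟨hle, hnorm, g, hg, hclo⟩ := hstep i
    exact key_step (s i.castSucc) (s i.succ) g hg hle hnorm hclo H hH
      (ih (H ⊓ s i.succ) inf_le_right)

/-- every polycyclic group is Hopfian: every surjective endomorphism
is injective. -/
theorem stmt5 (G : Type*) [Group G] (h : IsPolycyclic G) (f : G →* G)
    (hf : Function.Surjective f) : Function.Injective f := by
  let fn : ℕ → (G →* G) := fun n => Nat.rec (MonoidHom.id G) (fun _ p => f.comp p) n
  have fn_succ : ∀ n x, fn (n + 1) x = f (fn n x) := fun n x => rfl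
  have fn_surj : ∀ n, Function.Surjective (fn n) := by
    intro n; induction n with
    | zero => exact Function.surjective_id
    | succ n ih => exact hf.comp ih
  have ker_mono : Monotone fun n => (fn n).ker := by
    apply monotone_nat_of_le_succ
    intro n x hx
    rw [MonoidHom.mem_ker] at hx ⊢
    rw [fn_succ, hx, map_one]
  obtain ⟨S0, hS0, hfin⟩ := (Subgroup.fg_iff _).mp (poly_subgroups_fg h (⨆ n, (fn n).ker))
  have hdir : Directed (· ≤ ·) fun n => (fn n).ker := ker_mono.directed_le
  have hx' : ∀ x ∈ S0, ∃ i, x ∈ (fn i).ker := by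
    intro x hx
    have : x ∈ ⨆ n, (fn n).ker := hS0 ▸ Subgroup.subset_closure hx
    exact (Subgroup.mem_iSup_of_directed hdir).mp this
  choose! ix hix using hx'
  obtain ⟨Nb, hNb⟩ : ∃ Nb, ∀ x ∈ S0, ix x ≤ Nb := by
    refine ⟨hfin.toFinset.sup ix, ?_⟩
    intro x hx
    exact Finset.le_sup (hfin.mem_toFinset.mpr hx)
  have hKle : (⨆ n, (fn n).ker) ≤ (fn Nb).ker := by
    rw [← hS0]
    refine (Subgroup.closure_le _).mpr fun x hx => ker_mono (hNb x hx) (hix x hx)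
  rw [← MonoidHom.ker_eq_bot_iff, eq_bot_iff]
  intro x hx
  obtain ⟨y, hy⟩ := fn_surj Nb x
  have hy1 : y ∈ (fn (Nb + 1)).ker := by
    rw [MonoidHom.mem_ker, fn_succ, hy]
    exact hx
  have hy2 : y ∈ (fn Nb).ker := hKle (le_iSup (fun n => (fn n).ker) (Nb + 1) hy1)
  rw [MonoidHom.mem_ker] at hy2
  rw [Subgroup.mem_bot, ← hy, hy2]
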